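/- Let G be a simple graph, f a maximal null coloring of G, and u, v distinct vertices with f(u) = f(v) and d(u,v) <= 2, where d denotes graph distance. Let G' be the simple graph obtained from G by identifying u and v into a vertex uv, and let f' be the induced coloring of G' given by f'(uv) = f(u) and f'(x) = f(x) for all other vertices x. Then f' is a maximal null coloring of G'. -/

import Mathlib

open SimpleGraph

/-- The number of steps of the walk `W` from a vertex labeled `i` to a vertex labeled `j`
(with respect to the labeling `f`). -/
def colorSteps {V C : Type} [DecidableEq C] {G : SimpleGraph V} (f : V → C)
    {x y : V} (W : G.Walk x y) (i j : C) : ℕ :=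
  W.darts.countP fun d => decide (f d.toProd.1 = i ∧ f d.toProd.2 = j)

/-- A coloring `f` of `G` is a null coloring if for every closed walk `W` and every ordered
pair `(i, j)` of distinct colors, the number of steps of `W` from a vertex colored `i` to a
vertex colored `j` equals the number of steps from a vertex colored `j` to one colored `i`. -/
def IsNullColoring {V C : Type} [DecidableEq C] (G : SimpleGraph V) (f : V → C) : Prop :=
  ∀ (x : V) (W : G.Walk x x) (i j : C), i ≠ j → colorSteps f W i j = colorSteps f W j i

/-- A null coloring is maximal if no null coloring of `G` has more color classes
(the number of color classes of a coloring `g` is `(Set.range g).ncard`). -/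
def IsMaximalNullColoring {V C : Type} [DecidableEq C] (G : SimpleGraph V) (f : V → C) : Prop :=
  IsNullColoring G f ∧
    ∀ (D : Type) [DecidableEq D] (g : V → D), IsNullColoring G g →
      (Set.range g).ncard ≤ (Set.range f).ncard

/-- The quotient graph `G/f`: vertices are the color classes of `f` (identified with the
range of `f`), two distinct classes being adjacent iff some edge of `G` joins them. -/
def quotientGraph {V C : Type} (G : SimpleGraph V) (f : V → C) :
    SimpleGraph (Set.range f) where
  Adj a b := a ≠ b ∧ ∃ x y : V, G.Adj x y ∧ f x = a.1 ∧ f y = b.1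
  symm := by
    constructor
    rintro a b ⟨hab, x, y, hxy, hx, hy⟩
    exact ⟨hab.symm, y, x, hxy.symm, hy, hx⟩
  loopless := by constructor; rintro a ⟨h, -⟩; exact h rfl

/-- The graph obtained from `G` by identifying the vertices `u` and `v` (the merged vertex
is represented by `u`; any loops created are discarded). -/
def identify {V : Type} (G : SimpleGraph V) (u v : V) : SimpleGraph {x : V // x ≠ v} where
  Adj a b := a ≠ b ∧ (G.Adj a.1 b.1 ∨ (a.1 = u ∧ G.Adj v b.1) ∨ (b.1 = u ∧ G.Adj a.1 v))
  symm := by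
    constructor
    rintro a b ⟨hab, h⟩
    refine ⟨hab.symm, ?_⟩
    rcases h with h | ⟨ha, hb⟩ | ⟨hb, ha⟩
    · exact Or.inl h.symm
    · exact Or.inr (Or.inr ⟨ha, hb.symm⟩)
    · exact Or.inr (Or.inl ⟨hb, ha.symm⟩)
  loopless := by constructor; rintro a ⟨h, -⟩; exact h rfl

/-- The quotient map `h : G → G'` corresponding to the identification of `u` and `v`. -/
def identifyMap {V : Type} [DecidableEq V] (u v : V) (huv : u ≠ v) : V → {x : V // x ≠ v} :=
  fun x => if hx : x = v then ⟨u, huv⟩ else ⟨x, hx⟩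

/-- The net number of steps of `W` from label `a` to label `b`:  steps from `a` to `b`
minus steps from `b` to `a`. -/
def netCount {V C : Type} [DecidableEq C] {G : SimpleGraph V} (f : V → C)
    {x y : V} (W : G.Walk x y) (a b : C) : ℤ :=
  (colorSteps f W a b : ℤ) - (colorSteps f W b a : ℤ)


section Aux

variable {V C : Type} [DecidableEq C] {G : SimpleGraph V} {f : V → C}

lemma colorSteps_nil {x : V} (i j : C) :
    colorSteps f (Walk.nil : G.Walk x x) i j = 0 := rfl

lemma colorSteps_cons {x y z : V} (h : G.Adj x y) (W : G.Walk y z) (i j : C) :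
    colorSteps f (Walk.cons h W) i j =
      colorSteps f W i j + (if f x = i ∧ f y = j then 1 else 0) := by
  simp [colorSteps, List.countP_cons]

lemma colorSteps_append {x y z : V} (W1 : G.Walk x y) (W2 : G.Walk y z) (i j : C) :
    colorSteps f (W1.append W2) i j = colorSteps f W1 i j + colorSteps f W2 i j := by
  simp [colorSteps, Walk.darts_append, List.countP_append]

lemma colorSteps_copy {x y x' y' : V} (W : G.Walk x y) (hx : x = x') (hy : y = y') (i j : C) :
    colorSteps f (W.copy hx hy) i j = colorSteps f W i j := by
  simp [colorSteps, Walk.darts_copy]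

lemma colorSteps_reverse {x y : V} (W : G.Walk x y) (i j : C) :
    colorSteps f W.reverse i j = colorSteps f W j i := by
  simp only [colorSteps, Walk.darts_reverse, List.countP_reverse, List.countP_map]
  congr 1
  funext d
  exact decide_eq_decide.mpr (by cases d; simp [Dart.symm]; tauto)

/-- Key property of a short walk with equally-colored endpoints. -/
lemma short_symm {a b : V} (hfab : f a = f b) (P : G.Walk a b) (hlen : P.length ≤ 2)
    (i j : C) : colorSteps f P i j = colorSteps f P j i := by
  cases P with
  | nil => rfl
  | cons h1 q =>
    cases q with
    | nil =>
      simp only [colorSteps, Walk.darts_cons, Walk.darts_nil, List.countP_cons,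
        List.countP_nil, decide_eq_true_eq]
      by_cases hi : f a = i <;> by_cases hj : f a = j <;> simp_all
    | cons h2 r =>
      cases r with
      | nil =>
        rename_i w
        simp only [colorSteps, Walk.darts_cons, Walk.darts_nil, List.countP_cons,
          List.countP_nil, decide_eq_true_eq]
        by_cases hi : f a = i <;> by_cases hj : f a = j <;>
          by_cases hwi : f w = i <;> by_cases hwj : f w = j <;> simp_all
      | cons h3 s =>
        simp only [Walk.length_cons] at hlen
        omega

lemma identify_adj {V : Type} [DecidableEq V] {G : SimpleGraph V} {u v : V} (huv : u ≠ v)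
    {x y : V} (hxy : G.Adj x y) (hne : identifyMap u v huv x ≠ identifyMap u v huv y) :
    (identify G u v).Adj (identifyMap u v huv x) (identifyMap u v huv y) := by
  refine ⟨hne, ?_⟩
  unfold identifyMap
  by_cases hx : x = v <;> by_cases hy : y = v
  · exact absurd (hx.trans hy.symm) hxy.ne
  · simp only [dif_pos hx, dif_neg hy]
    exact Or.inr (Or.inl ⟨by simp, hx ▸ hxy⟩)
  · simp only [dif_neg hx, dif_pos hy]
    exact Or.inr (Or.inr ⟨by simp, hy ▸ hxy⟩)
  · simp only [dif_neg hx, dif_neg hy]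
    exact Or.inl hxy

lemma push_exists {V D : Type} [DecidableEq V] [DecidableEq D] {G : SimpleGraph V}
    (u v : V) (huv : u ≠ v) (g : {x : V // x ≠ v} → D)
    {x y : V} (W : G.Walk x y) :
    ∃ W' : (identify G u v).Walk (identifyMap u v huv x) (identifyMap u v huv y),
      ∀ i j : D, i ≠ j →
        colorSteps (fun z => g (identifyMap u v huv z)) W i j = colorSteps g W' i j := by
  induction W with
  | nil => exact ⟨Walk.nil, fun i j _ => rfl⟩
  | @cons x a y h W ih =>
    obtain ⟨W', hW'⟩ := ih
    by_cases heq : identifyMap u v huv x = identifyMap u v huv a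
    · refine ⟨W'.copy heq.symm rfl, ?_⟩
      intro i j hij
      rw [colorSteps_copy, colorSteps_cons, ← hW' i j hij]
      have h0 : ¬ (g (identifyMap u v huv x) = i ∧ g (identifyMap u v huv a) = j) := by
        rintro ⟨hi, hj⟩
        exact hij (hi ▸ hj ▸ (by rw [heq]))
      simp [h0]
    · refine ⟨Walk.cons (identify_adj huv h heq) W', ?_⟩
      intro i j hij
      rw [colorSteps_cons, colorSteps_cons, hW' i j hij]

lemma lift_exists {V C : Type} [DecidableEq V] [DecidableEq C] {G : SimpleGraph V}
    {u v : V} {f : V → C} (hfuv : f u = f v)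
    (P : G.Walk u v) (hP : ∀ i j : C, colorSteps f P i j = colorSteps f P j i)
    {a b : {x : V // x ≠ v}} (W' : (identify G u v).Walk a b) :
    ∃ W : G.Walk a.1 b.1, ∀ i j : C, i ≠ j →
      (colorSteps f W i j : ℤ) - colorSteps f W j i =
        (colorSteps (fun x => f x.1) W' i j : ℤ) - colorSteps (fun x => f x.1) W' j i := by
  induction W' with
  | nil => exact ⟨Walk.nil, fun i j _ => rfl⟩
  | @cons a c b h W' ih =>
    obtain ⟨W, hW⟩ := ih
    simp only [colorSteps_cons]
    obtain ⟨hne, hor⟩ := h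
    rcases hor with hG | ⟨hau, hvc⟩ | ⟨hcu, hav⟩
    · refine ⟨Walk.cons hG W, ?_⟩
      intro i j hij
      have h1 := hW i j hij
      have h2 := hW j i hij.symm
      simp only [colorSteps_cons] at *
      omega
    · refine ⟨(P.append (Walk.cons hvc W)).copy hau.symm rfl, ?_⟩
      intro i j hij
      have hva : f v = f a.1 := by rw [hau]; exact hfuv.symm
      have h1 := hW i j hij
      have h2 := hW j i hij.symm
      have h3 := hP i j
      simp only [colorSteps_copy, colorSteps_append, colorSteps_cons] at *
      rw [hva] at *
      omega
    · refine ⟨Walk.cons hav (P.reverse.append (W.copy hcu rfl)), ?_⟩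
      intro i j hij
      have hvc' : f v = f c.1 := by rw [hcu]; exact hfuv.symm
      have h1 := hW i j hij
      have h2 := hW j i hij.symm
      have h3 := hP i j
      simp only [colorSteps_cons, colorSteps_append, colorSteps_reverse, colorSteps_copy] at *
      rw [hvc'] at *
      omega

end Aux

/-- If `f` is a maximal null coloring of `G`, `f(u) = f(v)` and `d(u,v) ≤ 2`,
then the induced coloring `f'` of the graph `G'` obtained by identifying `u` and `v`
(given by `f'(uv) = f(u)` and `f'(x) = f(x)` otherwise) is a maximal null coloring of `G'`. -/
theorem identify_maximal_null_coloring
    {V C : Type} [Fintype V] [DecidableEq V] [DecidableEq C]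
    (G : SimpleGraph V) (f : V → C) (u v : V) (huv : u ≠ v)
    (hfuv : f u = f v) (hreach : G.Reachable u v) (hdist : G.dist u v ≤ 2)
    (hmax : IsMaximalNullColoring G f) :
    IsMaximalNullColoring (identify G u v) (fun x => f x.1) := by
  obtain ⟨hnull, hmaxi⟩ := hmax
  obtain ⟨P, hPlen⟩ : ∃ P : G.Walk u v, P.length ≤ 2 := by
    obtain ⟨P, hP⟩ := hreach.exists_walk_length_eq_dist
    exact ⟨P, by rw [hP]; exact hdist⟩
  have hQ : ∀ i j : C, colorSteps f P i j = colorSteps f P j i :=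
    short_symm hfuv P hPlen
  constructor
  · intro x W' i j hij
    obtain ⟨W, hW⟩ := lift_exists hfuv P hQ W'
    have h0 := hnull x.1 W i j hij
    have h1 := hW i j hij
    omega
  · intro D instD g hg
    have hrange : Set.range (fun x : {x : V // x ≠ v} => f x.1) = Set.range f := by
      ext c
      constructor
      · rintro ⟨x, rfl⟩; exact ⟨x.1, rfl⟩
      · rintro ⟨x, rfl⟩
        by_cases hx : x = v
        · exact ⟨⟨u, huv⟩, by simp only [hx]; exact hfuv⟩
        · exact ⟨⟨x, hx⟩, rfl⟩
    have hg' : IsNullColoring G (fun z => g (identifyMap u v huv z)) := by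
      intro x W i j hij
      obtain ⟨W', hW'⟩ := push_exists u v huv g W
      rw [hW' i j hij, hW' j i hij.symm]
      exact hg _ W' i j hij
    have hle := hmaxi D (fun z => g (identifyMap u v huv z)) hg'
    have hrg : Set.range (fun z => g (identifyMap u v huv z)) = Set.range g := by
      ext d
      constructor
      · rintro ⟨x, rfl⟩; exact ⟨_, rfl⟩
      · rintro ⟨⟨x, hx⟩, rfl⟩
        refine ⟨x, ?_⟩
        simp only [identifyMap, dif_neg hx]
    rw [hrange]
    rw [hrg] at hle
    exact hle
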